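/- For every positive integer n, complex number z with Re z > 0, real symmetric positive definite n×n matrix C, and bounded continuous function F: ℝⁿ → ℂ, the complex Gaussian integral satisfies |∫_{ℝⁿ} (2π)^{-n/2} (det(zC))^{-1/2} exp(-½⟨X, (zC)^{-1}X⟩) F(X) dX| ≤ (cos(arg z))^{-n/2} · sup_{X∈ℝⁿ} |F(X)|, where arg z ∈ (-π/2, π/2) and the principal branch of the square root of det(zC) is used. -/

import Mathlib

open MeasureTheory
open Matrix

private lemma my_smul_posDef {n : ℕ} {A : Matrix (Fin n) (Fin n) ℝ} (hA : A.PosDef) {t : ℝ}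
    (ht : 0 < t) : (t • A).PosDef := by
  refine Matrix.PosDef.of_dotProduct_mulVec_pos ?_ fun x hx => ?_
  · have h1 := hA.1
    unfold Matrix.IsHermitian at *
    rw [conjTranspose_smul, h1]
    simp
  · rw [smul_mulVec, dotProduct_smul, smul_eq_mul]
    exact mul_pos ht (hA.dotProduct_mulVec_pos hx)

private lemma my_gaussian_matrix {n : ℕ} (A : Matrix (Fin n) (Fin n) ℝ) (hA : A.PosDef) :
    Integrable (fun X : Fin n → ℝ => Real.exp (-(1/2) * (X ⬝ᵥ A *ᵥ X))) ∧
    ∫ X : Fin n → ℝ, Real.exp (-(1/2) * (X ⬝ᵥ A *ᵥ X))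
      = Real.sqrt (2 * Real.pi) ^ n / Real.sqrt A.det := by
  classical
  open scoped MatrixOrder in
  set S := CFC.sqrt A with hSdef
  open scoped MatrixOrder in
  have hSS : S * S = A := CFC.sqrt_mul_sqrt_self A hA.posSemidef.nonneg
  open scoped MatrixOrder in
  have hSsym : Sᵀ = S := by
    have h := (CFC.sqrt_nonneg A).posSemidef.1
    unfold Matrix.IsHermitian at h
    simpa using h
  have hAdet : 0 < A.det := hA.det_pos
  have hdet2 : S.det * S.det = A.det := by rw [← det_mul, hSS]
  have hSdet0 : S.det ≠ 0 := by
    intro h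
    rw [h, mul_zero] at hdet2
    exact hAdet.ne' hdet2.symm
  have habs : |S.det| = Real.sqrt A.det := by
    rw [← hdet2, ← sq, Real.sqrt_sq_eq_abs]
  have hquad : ∀ X : Fin n → ℝ, X ⬝ᵥ A *ᵥ X = ∑ i, ((S *ᵥ X) i) ^ 2 := by
    intro X
    rw [← hSS, ← mulVec_mulVec, dotProduct_mulVec, ← hSsym, mulVec_transpose, hSsym]
    simp [dotProduct, sq]
  set g : (Fin n → ℝ) → ℝ := fun Y => ∏ i, Real.exp (-(1/2) * Y i ^ 2) with hgdef
  have hg : ∀ X : Fin n → ℝ, Real.exp (-(1/2) * (X ⬝ᵥ A *ᵥ X)) = g (S *ᵥ X) := by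
    intro X
    rw [hquad, Finset.mul_sum, Real.exp_sum]
  have hgc : Continuous g := by
    apply continuous_finset_prod
    intro i _
    exact Real.continuous_exp.comp (by fun_prop)
  have hgInt : Integrable g := by
    exact Integrable.fintype_prod (f := fun (_ : Fin n) (y : ℝ) => Real.exp (-(1/2) * y ^ 2))
      (fun _ => integrable_exp_neg_mul_sq (by norm_num))
  have hgval : ∫ Y : Fin n → ℝ, g Y = Real.sqrt (2 * Real.pi) ^ n := by
    rw [hgdef]
    erw [integral_fintype_prod_eq_pow (ι := Fin n) (fun y : ℝ => Real.exp (-(1/2) * y ^ 2))]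
    simp only [Fintype.card_fin]
    congr 1
    rw [integral_gaussian (1/2 : ℝ), show Real.pi / (1/2) = 2 * Real.pi by ring]
  have hT : Continuous (⇑(toLin' S) : (Fin n → ℝ) → (Fin n → ℝ)) :=
    LinearMap.continuous_on_pi _
  have hTm : AEMeasurable (⇑(toLin' S)) (volume : Measure (Fin n → ℝ)) :=
    hT.measurable.aemeasurable
  have hmap : Measure.map (⇑(toLin' S)) volume = ENNReal.ofReal |S.det⁻¹| • volume :=
    Real.map_matrix_volume_pi_eq_smul_volume_pi hSdet0
  have hgm : AEStronglyMeasurable g (Measure.map (⇑(toLin' S)) volume) :=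
    hgc.stronglyMeasurable.aestronglyMeasurable
  constructor
  · have hI : Integrable (g ∘ ⇑(toLin' S)) := by
      rw [← integrable_map_measure hgm hTm, hmap]
      exact hgInt.smul_measure ENNReal.ofReal_ne_top
    apply hI.congr
    filter_upwards with X
    simp only [Function.comp, toLin'_apply]
    exact (hg X).symm
  · calc ∫ X : Fin n → ℝ, Real.exp (-(1/2) * (X ⬝ᵥ A *ᵥ X))
        = ∫ X : Fin n → ℝ, g (toLin' S X) := by
          refine integral_congr_ae (Filter.Eventually.of_forall fun X => ?_)
          show Real.exp (-(1/2) * (X ⬝ᵥ A *ᵥ X)) = g ((toLin' S) X)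
          rw [toLin'_apply]
          exact hg X
      _ = ∫ Y, g Y ∂(Measure.map (⇑(toLin' S)) volume) := (integral_map hTm hgm).symm
      _ = |S.det⁻¹| * ∫ Y, g Y := by
          rw [hmap, integral_smul_measure, ENNReal.toReal_ofReal (abs_nonneg _), smul_eq_mul]
      _ = Real.sqrt (2 * Real.pi) ^ n / Real.sqrt A.det := by
          rw [hgval, abs_inv, habs, inv_mul_eq_div]

theorem complex_gaussian_bound (n : ℕ) (hn : 1 ≤ n) (z : ℂ) (hz : 0 < z.re)
    (C : Matrix (Fin n) (Fin n) ℝ) (hC : C.PosDef)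
    (F : (Fin n → ℝ) → ℂ) (hFc : Continuous F) (hFb : ∃ B, ∀ X, ‖F X‖ ≤ B) :
    ‖(∫ X : Fin n → ℝ,
        (((2 * Real.pi) ^ (-(n : ℝ) / 2) : ℝ) : ℂ) *
          ((z • C.map (fun x : ℝ => (x : ℂ))).det ^ (-(1 : ℂ) / 2)) *
          Complex.exp (-(1 / 2) *
            dotProduct (fun i => (X i : ℂ))
              ((z • C.map (fun x : ℝ => (x : ℂ)))⁻¹.mulVec fun i => (X i : ℂ))) *
          F X)‖
      ≤ (Real.cos z.arg) ^ (-(n : ℝ) / 2) * ⨆ X, ‖F X‖ := by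
  classical
  have hz0 : z ≠ 0 := by
    intro h; rw [h] at hz; simp at hz
  set a : ℝ := ‖z‖ with ha
  have ha0 : 0 < a := norm_pos_iff.mpr hz0
  have hCd : (0:ℝ) < C.det := hC.det_pos
  set M := C.map (fun x : ℝ => (x : ℂ)) with hMdef
  have hMC : M = C.map ⇑Complex.ofRealHom := rfl
  have hCinv : C * C⁻¹ = 1 := C.mul_nonsing_inv (isUnit_iff_ne_zero.mpr hCd.ne')
  have hinv : (z • M)⁻¹ = z⁻¹ • (C⁻¹.map ⇑Complex.ofRealHom) := by
    apply Matrix.inv_eq_right_inv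
    rw [Matrix.smul_mul, Matrix.mul_smul, smul_smul, mul_inv_cancel₀ hz0, hMC,
      ← Matrix.map_mul, hCinv]
    simp
  set Q : (Fin n → ℝ) → ℝ := fun X => X ⬝ᵥ C⁻¹ *ᵥ X with hQdef
  have hCinvPD : (C⁻¹).PosDef := Matrix.posDef_inv_iff.mpr hC
  have hQnn : ∀ X, 0 ≤ Q X := by
    intro X
    have h := hCinvPD.posSemidef.dotProduct_mulVec_nonneg X
    simpa [hQdef] using h
  set t : ℝ := z.re / Complex.normSq z with htdef
  have hnormSq : Complex.normSq z = a ^ 2 := by rw [ha, Complex.sq_norm]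
  have ht0 : 0 < t := div_pos hz (Complex.normSq_pos.mpr hz0)
  have hexp : ∀ X : Fin n → ℝ,
      (fun i => (X i : ℂ)) ⬝ᵥ ((z • M)⁻¹ *ᵥ fun i => (X i : ℂ)) = z⁻¹ * (Q X : ℂ) := by
    intro X
    rw [hinv, Matrix.smul_mulVec, dotProduct_smul, smul_eq_mul]
    congr 1
    have h1 : (C⁻¹.map ⇑Complex.ofRealHom) *ᵥ (fun i => (X i : ℂ))
        = fun i => ((C⁻¹ *ᵥ X) i : ℂ) := by
      ext i
      simp [Matrix.mulVec, dotProduct, Matrix.map_apply]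
    rw [h1]
    simp [dotProduct, hQdef, Matrix.mulVec]
  have hnormexp : ∀ X : Fin n → ℝ,
      ‖(Complex.exp (-(1/2) * ((fun i => (X i : ℂ)) ⬝ᵥ
        ((z • M)⁻¹ *ᵥ fun i => (X i : ℂ)))))‖ = Real.exp (-(1/2) * (t * Q X)) := by
    intro X
    rw [hexp X, Complex.norm_exp]
    congr 1
    simp [Complex.mul_re, Complex.inv_re, Complex.inv_im, htdef]
  have hdet : (z • M).det = z ^ n * (C.det : ℂ) := by
    rw [Matrix.det_smul, Fintype.card_fin, hMC]
    congr 1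
    rw [← RingHom.mapMatrix_apply, ← RingHom.map_det]
    rfl
  have hDne : z ^ n * (C.det : ℂ) ≠ 0 := by
    apply mul_ne_zero (pow_ne_zero _ hz0)
    exact_mod_cast hCd.ne'
  have hconst : ‖((z • M).det ^ (-(1:ℂ)/2))‖
      = (a ^ n * C.det) ^ (-(1/2) : ℝ) := by
    rw [hdet, Complex.norm_cpow_of_ne_zero hDne]
    have h1 : ((-(1:ℂ))/2).re = -(1/2 : ℝ) := by norm_num
    have h2 : ((-(1:ℂ))/2).im = 0 := by norm_num
    rw [h1, h2, mul_zero, Real.exp_zero, div_one]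
    congr 1
    rw [norm_mul, norm_pow, Complex.norm_real, Real.norm_eq_abs, abs_of_pos hCd, ha]
  set B := ⨆ X, ‖F X‖ with hB
  obtain ⟨B₀, hB₀⟩ := hFb
  have hBdd : BddAbove (Set.range fun X => ‖F X‖) := by
    refine ⟨B₀, ?_⟩
    rintro _ ⟨X, rfl⟩
    exact hB₀ X
  have hFB : ∀ X, ‖F X‖ ≤ B := fun X => le_ciSup hBdd X
  have hB0 : (0:ℝ) ≤ B := le_trans (norm_nonneg _) (hFB 0)
  set A : Matrix (Fin n) (Fin n) ℝ := t • C⁻¹ with hAdef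
  have hAPD : A.PosDef := my_smul_posDef hCinvPD ht0
  obtain ⟨hInt, hIval⟩ := my_gaussian_matrix A hAPD
  have hAquad : ∀ X : Fin n → ℝ, X ⬝ᵥ A *ᵥ X = t * Q X := by
    intro X
    rw [hAdef, Matrix.smul_mulVec, dotProduct_smul, smul_eq_mul]
  set K : ℝ := (2 * Real.pi) ^ (-(n:ℝ)/2) * (a ^ n * C.det) ^ (-(1/2) : ℝ) * B with hK
  have hc1 : (0:ℝ) < (2 * Real.pi) ^ (-(n:ℝ)/2) :=
    Real.rpow_pos_of_pos (by positivity) _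
  have hc2 : (0:ℝ) < (a ^ n * C.det) ^ (-(1/2) : ℝ) :=
    Real.rpow_pos_of_pos (by positivity) _
  have hpt : ∀ X : Fin n → ℝ,
      ‖(((2 * Real.pi) ^ (-(n : ℝ) / 2) : ℝ) : ℂ) *
          ((z • M).det ^ (-(1 : ℂ) / 2)) *
          Complex.exp (-(1 / 2) *
            ((fun i => (X i : ℂ)) ⬝ᵥ ((z • M)⁻¹ *ᵥ fun i => (X i : ℂ)))) * F X‖
        ≤ K * Real.exp (-(1/2) * (X ⬝ᵥ A *ᵥ X)) := by
    intro X
    rw [norm_mul, norm_mul, norm_mul, hconst, hnormexp X,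
      Complex.norm_real, Real.norm_eq_abs, abs_of_pos hc1, hAquad X, hK]
    have hFX := hFB X
    calc (2 * Real.pi) ^ (-(n:ℝ)/2) * (a ^ n * C.det) ^ (-(1/2) : ℝ) *
          Real.exp (-(1/2) * (t * Q X)) * ‖F X‖
        ≤ (2 * Real.pi) ^ (-(n:ℝ)/2) * (a ^ n * C.det) ^ (-(1/2) : ℝ) *
          Real.exp (-(1/2) * (t * Q X)) * B := by
          apply mul_le_mul_of_nonneg_left hFX
          positivity
      _ = (2 * Real.pi) ^ (-(n:ℝ)/2) * (a ^ n * C.det) ^ (-(1/2) : ℝ) * B *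
          Real.exp (-(1/2) * (t * Q X)) := by ring
  have hmain : ‖(∫ X : Fin n → ℝ,
      (((2 * Real.pi) ^ (-(n : ℝ) / 2) : ℝ) : ℂ) *
        ((z • M).det ^ (-(1 : ℂ) / 2)) *
        Complex.exp (-(1 / 2) *
          ((fun i => (X i : ℂ)) ⬝ᵥ ((z • M)⁻¹ *ᵥ fun i => (X i : ℂ)))) * F X)‖
      ≤ K * (Real.sqrt (2 * Real.pi) ^ n / Real.sqrt A.det) := by
    rw [← hIval, ← integral_const_mul]
    exact norm_integral_le_of_norm_le (hInt.const_mul K) (Filter.Eventually.of_forall hpt)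
  -- final arithmetic
  have hAdet2 : A.det = t ^ n * C.det⁻¹ := by
    rw [hAdef, Matrix.det_smul, Fintype.card_fin, Matrix.det_nonsing_inv,
      Ring.inverse_eq_inv']
  have e1 : Real.sqrt (2 * Real.pi) ^ n = (2 * Real.pi) ^ ((n:ℝ)/2) := by
    rw [← Real.rpow_natCast (Real.sqrt (2 * Real.pi)) n, Real.sqrt_eq_rpow,
      ← Real.rpow_mul (by positivity)]
    congr 1; ring
  have e2 : (a ^ n * C.det) ^ (-(1/2) : ℝ)
      = (a ^ ((n:ℝ)/2))⁻¹ * C.det ^ (-(1/2) : ℝ) := by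
    rw [Real.mul_rpow (by positivity) hCd.le]
    congr 1
    rw [← Real.rpow_natCast a n, ← Real.rpow_mul ha0.le,
      show (n:ℝ) * (-(1/2)) = -((n:ℝ)/2) by ring, Real.rpow_neg ha0.le]
  have e3 : Real.sqrt (t ^ n * C.det⁻¹) = t ^ ((n:ℝ)/2) * C.det ^ (-(1/2) : ℝ) := by
    rw [Real.sqrt_mul (by positivity)]
    congr 1
    · rw [← Real.rpow_natCast t n, Real.sqrt_eq_rpow, ← Real.rpow_mul ht0.le]
      congr 1; ring
    · rw [Real.sqrt_inv, Real.sqrt_eq_rpow, ← Real.rpow_neg hCd.le]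
  have hdpos : (0:ℝ) < C.det ^ (-(1/2) : ℝ) := Real.rpow_pos_of_pos hCd _
  have htp : (0:ℝ) < t ^ ((n:ℝ)/2) := Real.rpow_pos_of_pos ht0 _
  have h2pi : (0:ℝ) < (2 * Real.pi) ^ ((n:ℝ)/2) :=
    Real.rpow_pos_of_pos (by positivity) _
  have hap : (0:ℝ) < a ^ ((n:ℝ)/2) := Real.rpow_pos_of_pos ha0 _
  have c0 : (2 * Real.pi) ^ (-(n:ℝ)/2) = ((2 * Real.pi) ^ ((n:ℝ)/2))⁻¹ := by
    rw [show -(n:ℝ)/2 = -((n:ℝ)/2) by ring, Real.rpow_neg (by positivity)]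
  have c3 : (z.re / a) ^ (-(n:ℝ)/2) = ((z.re / a) ^ ((n:ℝ)/2))⁻¹ := by
    rw [show -(n:ℝ)/2 = -((n:ℝ)/2) by ring, Real.rpow_neg (by positivity)]
  have crel : a ^ ((n:ℝ)/2) * t ^ ((n:ℝ)/2) = (z.re / a) ^ ((n:ℝ)/2) := by
    rw [← Real.mul_rpow ha0.le ht0.le]
    congr 1
    rw [htdef, hnormSq]
    field_simp
  have hfinal : K * (Real.sqrt (2 * Real.pi) ^ n / Real.sqrt A.det)
      = Real.cos z.arg ^ (-(n:ℝ)/2) * B := by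
    rw [Complex.cos_arg hz0, ← ha, hK, hAdet2, e1, e2, e3, c0, c3, ← crel, mul_inv]
    field_simp
  exact hmain.trans (le_of_eq hfinal)
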